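/- arXiv:1408.5837 — 6 statements merged into one kernel-verified Lean document; each statement's English description precedes it below -/
import Mathlib

section
/- Gauss's formula: for a finite field F with q elements, n times the number of monic irreducible polynomials of degree n in F[t] equals Σ_{d|n} μ(n/d) q^d, where μ is the Möbius function. -/
open Polynomial Finset

noncomputable section GaussAux

variable {F : Type} [Field F] [Fintype F]

instance gaussMonicIrredFinite (F : Type) [Field F] [Fintype F] (d : ℕ) :
    Finite {f : Polynomial F // f.Monic ∧ Irreducible f ∧ f.natDegree = d} := by
  apply Finite.of_injective
    (fun f : {f : Polynomial F // f.Monic ∧ Irreducible f ∧ f.natDegree = d} =>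
      (fun i : Fin (d + 1) => (f : Polynomial F).coeff i))
  rintro ⟨f, _, _, hf⟩ ⟨g, _, _, hg⟩ h
  refine Subtype.ext (Polynomial.ext fun i => ?_)
  show f.coeff i = g.coeff i
  by_cases hi : i < d + 1
  · exact congrFun h ⟨i, hi⟩
  · rw [coeff_eq_zero_of_natDegree_lt (by omega), coeff_eq_zero_of_natDegree_lt (by omega)]

/-- An irreducible monic polynomial of degree dividing `n` divides `X^(q^n) - X`. -/
lemma gauss_dvd {f : Polynomial F} (hm : f.Monic) (hi : Irreducible f)
    {n : ℕ} (hd : f.natDegree ∣ n) :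
    f ∣ (X ^ (Fintype.card F) ^ n - X) := by
  classical
  haveI : Fact (Irreducible f) := ⟨hi⟩
  set q := Fintype.card F with hq
  let K := AdjoinRoot f
  haveI : FiniteDimensional F K := PowerBasis.finite (AdjoinRoot.powerBasis hi.ne_zero)
  haveI : Finite K := Module.finite_of_finite F
  haveI : Fintype K := Fintype.ofFinite K
  have hfin : Module.finrank F K = f.natDegree := by
    simpa using (AdjoinRoot.powerBasis hi.ne_zero).finrank
  have hcard : Fintype.card K = q ^ f.natDegree := by
    rw [Module.card_eq_pow_finrank (K := F) (V := K), hfin]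
  obtain ⟨m, rfl⟩ := hd
  have hroot : (aeval (AdjoinRoot.root f)) (X ^ q ^ (f.natDegree * m) - X : Polynomial F) = 0 := by
    rw [map_sub, aeval_X_pow, aeval_X, pow_mul, ← hcard, sub_eq_zero]
    exact FiniteField.pow_card_pow m _
  have hdvd := minpoly.dvd F (AdjoinRoot.root f) hroot
  rwa [AdjoinRoot.minpoly_root hi.ne_zero, hm.leadingCoeff, inv_one, map_one, mul_one] at hdvd

/-- The key counting identity: `q ^ n = ∑_{d ∣ n} d * N_d`. -/
lemma gauss_key (F : Type) [Field F] [Fintype F] (n : ℕ) (hn : n ≠ 0) :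
    (Fintype.card F) ^ n = ∑ d ∈ n.divisors,
      d * Nat.card {f : Polynomial F // f.Monic ∧ Irreducible f ∧ f.natDegree = d} := by
  classical
  set q := Fintype.card F with hq
  have hq1 : 1 < q := Fintype.one_lt_card
  set g : Polynomial F := X ^ q ^ n - X with hg
  have hgne : g ≠ 0 := FiniteField.X_pow_card_pow_sub_X_ne_zero F hn hq1
  -- characteristic
  set p := ringChar F with hp
  haveI : CharP F p := ringChar.charP F
  obtain ⟨k, hpp, hqk⟩ := FiniteField.card F p
  haveI : Fact p.Prime := ⟨hpp⟩
  have hqk' : q = p ^ (k : ℕ) := hqk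
  have hsep : g.Separable := by
    apply galois_poly_separable p (q ^ n)
    rw [hqk']
    exact dvd_pow (dvd_pow_self p k.ne_zero) (by positivity)
  set E := g.SplittingField
  haveI : FiniteDimensional F E := IsSplittingField.finiteDimensional E g
  haveI : Fintype E := Fintype.ofFinite E
  have hsplits : Splits (g.map (algebraMap F E)) := SplittingField.splits g
  have hdeg : g.natDegree = q ^ n := FiniteField.X_pow_card_pow_sub_X_natDegree_eq F hn hq1
  haveI : CharP E p := (Algebra.charP_iff F E p).mp ‹_›
  haveI : ExpChar E p := ExpChar.prime hpp
  -- every element of E is a root of g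
  have hroot : ∀ x : E, x ^ q ^ n = x := by
    have hqpn : q ^ n = p ^ ((k : ℕ) * n) := by rw [hqk', pow_mul]
    set φ := iterateFrobenius E p (k * n) with hφ
    have hφx : ∀ x : E, φ x = x ^ q ^ n := by
      intro x; rw [hφ, iterateFrobenius_def, hqpn]
    set H := RingHom.eqLocus φ (RingHom.id E) with hH
    have hsub : Set.range (algebraMap F E) ∪ g.rootSet E ⊆ H := by
      rintro x (⟨a, rfl⟩ | hx)
      · show φ _ = _
        rw [hφx, ← map_pow, FiniteField.pow_card_pow]; rfl
      · rw [mem_rootSet_of_ne hgne] at hx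
        show φ _ = _
        rw [hφx]
        have : x ^ q ^ n - x = 0 := by
          simpa [hg, sub_eq_zero] using hx
        rw [sub_eq_zero] at this
        rw [this]; rfl
    intro x
    have hx : x ∈ Algebra.adjoin F (g.rootSet E) := by
      rw [SplittingField.adjoin_rootSet]; trivial
    rw [Algebra.mem_adjoin_iff] at hx
    have := (Subring.closure_le (t := H)).mpr hsub hx
    have h2 : φ x = x := this
    rw [hφx] at h2
    exact h2
  -- cardinality of E
  have hcardE : Fintype.card E = q ^ n := by
    have hcardroot : Fintype.card (g.rootSet E) = q ^ n := by
      rw [card_rootSet_eq_natDegree hsep hsplits, hdeg]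
    rw [← hcardroot]
    refine (Fintype.card_congr (Equiv.subtypeUnivEquiv ?_)).symm
    intro x
    rw [mem_rootSet_of_ne hgne]
    simp [hg, sub_eq_zero, hroot x]
  -- fibers of minpoly
  have hint : ∀ x : E, IsIntegral F x := fun x => IsIntegral.of_finite F x
  have hfinrank : Module.finrank F E = n := by
    have := Module.card_eq_pow_finrank (K := F) (V := E)
    rw [hcardE] at this
    exact (Nat.pow_right_injective hq1 this).symm
  set T : Finset (Polynomial F) := Finset.image (fun x : E => minpoly F x) Finset.univ with hT
  have hTmem : ∀ f ∈ T, f.Monic ∧ Irreducible f ∧ f.natDegree ∣ n := by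
    intro f hf
    rw [hT, Finset.mem_image] at hf
    obtain ⟨x, -, rfl⟩ := hf
    exact ⟨minpoly.monic (hint x), minpoly.irreducible (hint x),
      hfinrank ▸ minpoly.degree_dvd (hint x)⟩
  -- card E = sum over T of natDegree
  have hstep1 : Fintype.card E = ∑ f ∈ T, f.natDegree := by
    rw [← Finset.card_univ,
      Finset.card_eq_sum_card_fiberwise (f := fun x : E => minpoly F x) (t := T)
        (fun x _ => Finset.mem_image_of_mem _ (Finset.mem_univ x))]
    apply Finset.sum_congr rfl
    intro f hf
    obtain ⟨hmon, hirr, hdvd⟩ := hTmem f hf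
    have hfne : f ≠ 0 := hirr.ne_zero
    have hfd : f ∣ g := gauss_dvd hmon hirr hdvd
    have hfsplit : Splits (f.map (algebraMap F E)) :=
      hsplits.of_dvd (Polynomial.map_ne_zero hgne) (Polynomial.map_dvd _ hfd)
    have hfsep : f.Separable := hsep.of_dvd hfd
    have hcardr : Fintype.card (f.rootSet E) = f.natDegree :=
      card_rootSet_eq_natDegree hfsep hfsplit
    rw [← hcardr]
    rw [Fintype.card_eq_nat_card, Nat.card_eq_card_toFinset]
    congr 1
    ext y
    simp only [Set.mem_toFinset, mem_rootSet_of_ne hfne, Finset.mem_filter, Finset.mem_univ,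
      true_and]
    constructor
    · intro hy
      exact hy ▸ minpoly.aeval F y
    · intro hy
      exact (minpoly.eq_of_irreducible_of_monic hirr hy hmon).symm
  -- regroup by degree
  have hstep2 : ∑ f ∈ T, f.natDegree = ∑ d ∈ n.divisors,
      d * Nat.card {f : Polynomial F // f.Monic ∧ Irreducible f ∧ f.natDegree = d} := by
    rw [← Finset.sum_fiberwise_of_maps_to (g := fun f : Polynomial F => f.natDegree)
      (t := n.divisors) (fun f hf => Nat.mem_divisors.mpr ⟨(hTmem f hf).2.2, hn⟩)]
    apply Finset.sum_congr rfl
    intro d hd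
    rw [Finset.sum_congr rfl (fun f hf => (Finset.mem_filter.mp hf).2),
      Finset.sum_const, smul_eq_mul, mul_comm]
    congr 1
    -- card of the filter equals Nat.card of the subtype
    have hseteq : ↑(T.filter fun f => f.natDegree = d) =
        {f : Polynomial F | f.Monic ∧ Irreducible f ∧ f.natDegree = d} := by
      ext f
      simp only [Finset.coe_filter, Set.mem_setOf_eq]
      constructor
      · rintro ⟨hfT, hfd⟩
        obtain ⟨hmon, hirr, -⟩ := hTmem f hfT
        exact ⟨hmon, hirr, hfd⟩
      · rintro ⟨hmon, hirr, hfd⟩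
        refine ⟨?_, hfd⟩
        have hddvd : f.natDegree ∣ n := hfd ▸ Nat.dvd_of_mem_divisors hd
        have hfd0 : f.natDegree ≠ 0 := by
          intro h0
          exact hirr.not_isUnit (hmon.natDegree_eq_zero.mp h0 ▸ isUnit_one)
        have hfdvd : f ∣ g := gauss_dvd hmon hirr hddvd
        have hfsplit : Splits (f.map (algebraMap F E)) :=
            hsplits.of_dvd (Polynomial.map_ne_zero hgne) (Polynomial.map_dvd _ hfdvd)
        obtain ⟨y, hy⟩ := hfsplit.exists_eval_eq_zero
          (by rw [degree_map]; exact (natDegree_pos_iff_degree_pos.mp (Nat.pos_of_ne_zero hfd0)).ne')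
        rw [hT, Finset.mem_image]
        refine ⟨y, Finset.mem_univ y, ?_⟩
        exact (minpoly.eq_of_irreducible_of_monic hirr (by rw [aeval_def, ← eval_map]; exact hy) hmon).symm
    calc (T.filter fun f => f.natDegree = d).card
        = Set.ncard (↑(T.filter fun f => f.natDegree = d) : Set (Polynomial F)) :=
          (Set.ncard_coe_finset _).symm
      _ = Set.ncard {f : Polynomial F | f.Monic ∧ Irreducible f ∧ f.natDegree = d} := by
          rw [hseteq]
      _ = Nat.card {f : Polynomial F // f.Monic ∧ Irreducible f ∧ f.natDegree = d} :=
          (Nat.card_coe_set_eq _).symm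
  rw [← hcardE, hstep1, hstep2]

end GaussAux

open ArithmeticFunction in
/-- Gauss's formula: `n` times the number of monic irreducible polynomials of degree `n`
over a finite field with `q` elements equals `∑_{d ∣ n} μ(n/d) q^d`. -/
theorem gauss_formula (F : Type) [Field F] [Fintype F] (q : ℕ)
    (hq : Fintype.card F = q) (n : ℕ) (hn : 1 ≤ n) :
    (n * Nat.card {f : Polynomial F // f.Monic ∧ Irreducible f ∧ f.natDegree = n} : ℤ) =
      ∑ d ∈ n.divisors, (moebius (n / d) : ℤ) * (q : ℤ) ^ d := by
  subst hq
  have key := (sum_eq_iff_sum_mul_moebius_eq (R := ℤ)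
    (f := fun d => (d * Nat.card {f : Polynomial F // f.Monic ∧ Irreducible f ∧ f.natDegree = d} : ℤ))
    (g := fun m => (Fintype.card F : ℤ) ^ m)).mp ?_ n hn
  · rw [← key]
    simp only [Int.cast_id]
    rw [Nat.sum_divisorsAntidiagonal' (f := fun a b => (moebius a : ℤ) * (Fintype.card F : ℤ) ^ b)]
  · intro m hm
    have := gauss_key F m hm.ne'
    exact_mod_cast this.symm
end

section
/- Let p be the smallest prime divisor of n ≥ 2 and q ≥ 2 an integer. Then Σ_{d|n} μ(n/d) q^d ≤ q^n, where μ is the Möbius function. -/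
open ArithmeticFunction in
/-- For `n ≥ 2` with smallest prime divisor `p`, and an integer `q ≥ 2`,
`∑_{d ∣ n} μ(n/d) q^d ≤ q^n`. -/
theorem moebius_sum_le (n q p : ℕ) (hn : 2 ≤ n) (hq : 2 ≤ q) (hp : p = n.minFac) :
    ∑ d ∈ n.divisors, (moebius (n / d) : ℤ) * (q : ℤ) ^ d ≤ (q : ℤ) ^ n := by
  have hn0 : n ≠ 0 := by omega
  have hpp : p.Prime := hp ▸ Nat.minFac_prime (by omega)
  have hpd : p ∣ n := hp ▸ Nat.minFac_dvd n
  set m := n / p with hm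
  have hmd : m ∣ n := Nat.div_dvd_of_dvd hpd
  have hmlt : m < n := Nat.div_lt_self (by omega) hpp.one_lt
  have hm0 : 0 < m := Nat.div_pos (Nat.le_of_dvd (by omega) hpd) hpp.pos
  have hnm : n / m = p := Nat.div_div_self hpd hn0
  have hq0 : (0:ℤ) ≤ (q:ℤ) := by positivity
  have hmu : ∀ k : ℕ, (moebius k : ℤ) ≤ 1 := fun k =>
    le_trans (le_abs_self _) abs_moebius_le_one
  have hnmem : n ∈ n.divisors := Nat.mem_divisors_self n hn0
  rw [← Finset.add_sum_erase _ _ hnmem, Nat.div_self (by omega), moebius_apply_one]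
  have hmmem : m ∈ n.divisors.erase n :=
    Finset.mem_erase.mpr ⟨hmlt.ne, Nat.mem_divisors.mpr ⟨hmd, hn0⟩⟩
  rw [← Finset.add_sum_erase _ _ hmmem, hnm, moebius_apply_prime hpp]
  -- bound the remaining sum
  have hsub : (n.divisors.erase n).erase m ⊆ Finset.range m := by
    intro d hd
    rcases Finset.mem_erase.mp hd with ⟨hdm, hd'⟩
    rcases Finset.mem_erase.mp hd' with ⟨hdn, hddvd⟩
    rcases Nat.mem_divisors.mp hddvd with ⟨hdvd, -⟩
    have hd0 : 0 < d := Nat.pos_of_dvd_of_pos hdvd (by omega)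
    have hnd1 : 1 < n / d := by
      have hpos : 0 < n / d := Nat.div_pos (Nat.le_of_dvd (by omega) hdvd) hd0
      have hne : n / d ≠ 1 := by
        intro h
        have := Nat.div_div_self hdvd hn0
        rw [h, Nat.div_one] at this
        exact hdn this.symm
      omega
    have hpd' : p ≤ n / d := hp ▸ Nat.minFac_le_of_dvd hnd1 (Nat.div_dvd_of_dvd hdvd)
    have : n / (n / d) ≤ n / p := Nat.div_le_div_left hpd' hpp.pos
    rw [Nat.div_div_self hdvd hn0] at this
    exact Finset.mem_range.mpr (lt_of_le_of_ne this hdm)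
  have hb1 : ∑ d ∈ (n.divisors.erase n).erase m, (moebius (n / d) : ℤ) * (q:ℤ) ^ d
      ≤ ∑ d ∈ Finset.range m, (q:ℤ) ^ d := by
    calc ∑ d ∈ (n.divisors.erase n).erase m, (moebius (n / d) : ℤ) * (q:ℤ) ^ d
        ≤ ∑ d ∈ (n.divisors.erase n).erase m, (q:ℤ) ^ d := by
          apply Finset.sum_le_sum
          intro d _
          have := hmu (n / d)
          nlinarith [pow_nonneg hq0 d]
      _ ≤ ∑ d ∈ Finset.range m, (q:ℤ) ^ d :=
          Finset.sum_le_sum_of_subset_of_nonneg hsub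
            (fun i _ _ => pow_nonneg hq0 i)
  have hgeom : ∑ d ∈ Finset.range m, (q:ℤ) ^ d ≤ (q:ℤ) ^ m - 1 := by
    have h := geom_sum_mul (q:ℤ) m
    have hnn : (0:ℤ) ≤ ∑ d ∈ Finset.range m, (q:ℤ) ^ d :=
      Finset.sum_nonneg fun i _ => pow_nonneg hq0 i
    nlinarith
  have hqm : (0:ℤ) ≤ (q:ℤ) ^ m := pow_nonneg hq0 m
  have : ((-1 : ℤ)) * (q:ℤ) ^ m + ∑ d ∈ (n.divisors.erase n).erase m,
      (moebius (n / d) : ℤ) * (q:ℤ) ^ d ≤ 0 := by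
    have := hb1.trans hgeom
    linarith
  linarith
end

section
/- Let n ≥ 3 be an integer with smallest prime divisor p, and q ≥ 2 an integer. Then Σ_{d|n} μ(n/d) q^d ≥ q^n - q^{1 + n/p} ≥ q^n - q^{n-1}. -/
private lemma geom_le_pow (q : ℕ) (hq : 2 ≤ q) : ∀ k, ∑ i ∈ Finset.range k, (q : ℤ) ^ i ≤ (q : ℤ) ^ k := by
  intro k
  induction k with
  | zero => simp
  | succ k ih =>
    rw [Finset.sum_range_succ, pow_succ]
    have h2 : (2 : ℤ) ≤ (q : ℤ) := by exact_mod_cast hq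
    nlinarith [pow_pos (show (0:ℤ) < q by positivity) k]

open ArithmeticFunction in
/-- For `n ≥ 3` with smallest prime divisor `p`, and an integer `q ≥ 2`,
`∑_{d ∣ n} μ(n/d) q^d ≥ q^n - q^{1 + n/p} ≥ q^n - q^{n-1}`. -/
theorem moebius_sum_ge (n q p : ℕ) (hn : 3 ≤ n) (hq : 2 ≤ q) (hp : p = n.minFac) :
    (q : ℤ) ^ n - (q : ℤ) ^ (1 + n / p) ≤
        ∑ d ∈ n.divisors, (moebius (n / d) : ℤ) * (q : ℤ) ^ d ∧
      (q : ℤ) ^ n - (q : ℤ) ^ (n - 1) ≤ (q : ℤ) ^ n - (q : ℤ) ^ (1 + n / p) := by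
  have hn0 : 0 < n := by omega
  have hq1 : (1 : ℤ) ≤ (q : ℤ) := by exact_mod_cast (by omega : 1 ≤ q)
  have hp2 : 2 ≤ p := hp ▸ (Nat.minFac_prime (by omega)).two_le
  have hpn : p ∣ n := hp ▸ Nat.minFac_dvd n
  -- exponent inequality
  have hexp : 1 + n / p ≤ n - 1 := by
    obtain ⟨m, hm⟩ := hpn
    have hdiv : n / p = m := by rw [hm, Nat.mul_div_cancel_left _ (by omega)]
    rw [hdiv]
    rcases Nat.lt_or_ge m 2 with hm2 | hm2
    · interval_cases m <;> omega
    · have : 2 * m ≤ p * m := Nat.mul_le_mul_right m hp2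
      omega
  constructor
  · -- split off d = n term
    have hmem : n ∈ n.divisors := Nat.mem_divisors_self n (by omega)
    rw [← Finset.add_sum_erase _ _ hmem]
    have hμ1 : (moebius (n / n) : ℤ) * (q : ℤ) ^ n = (q : ℤ) ^ n := by
      rw [Nat.div_self hn0]; simp
    rw [hμ1]
    have hT : |∑ d ∈ n.divisors.erase n, (moebius (n / d) : ℤ) * (q : ℤ) ^ d|
        ≤ (q : ℤ) ^ (1 + n / p) := by
      calc |∑ d ∈ n.divisors.erase n, (moebius (n / d) : ℤ) * (q : ℤ) ^ d|
          ≤ ∑ d ∈ n.divisors.erase n, |(moebius (n / d) : ℤ) * (q : ℤ) ^ d| :=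
            Finset.abs_sum_le_sum_abs _ _
        _ ≤ ∑ d ∈ n.divisors.erase n, (q : ℤ) ^ d := by
            apply Finset.sum_le_sum
            intro d _
            rw [abs_mul, abs_pow, abs_of_nonneg (by positivity : (0:ℤ) ≤ (q:ℤ))]
            have : |(moebius (n / d) : ℤ)| ≤ 1 := by
              rcases ArithmeticFunction.moebius_eq_or (n / d) with h | h | h <;>
                simp [h]
            nlinarith [pow_pos (show (0:ℤ) < q by positivity) d,
              abs_nonneg ((moebius (n / d) : ℤ))]
        _ ≤ ∑ d ∈ Finset.range (n / p + 1), (q : ℤ) ^ d := by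
            apply Finset.sum_le_sum_of_subset_of_nonneg
            · intro d hd
              rw [Finset.mem_erase, Nat.mem_divisors] at hd
              obtain ⟨hdn, hdvd, _⟩ := hd
              have hd0 : 0 < d := Nat.pos_of_dvd_of_pos hdvd hn0
              have he : n / d ∣ n := Nat.div_dvd_of_dvd hdvd
              have he2 : 2 ≤ n / d := by
                have hc := Nat.div_mul_cancel hdvd
                generalize hk : n / d = k at hc ⊢
                rcases Nat.lt_or_ge k 2 with h | h
                · exfalso
                  have h1 : k = 0 ∨ k = 1 := by omega
                  rcases h1 with h1 | h1 <;> rw [h1] at hc <;> omega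
                · exact h
              have hple : p ≤ n / d := hp ▸ Nat.minFac_le_of_dvd he2 he
              have h1 : n / (n / d) ≤ n / p := Nat.div_le_div_left hple (by omega)
              have h2 : n / (n / d) = d := Nat.div_div_self hdvd (by omega)
              simp only [Finset.mem_range]; omega
            · intro d _ _; positivity
        _ ≤ (q : ℤ) ^ (n / p + 1) := geom_le_pow q hq _
        _ = (q : ℤ) ^ (1 + n / p) := by ring_nf
    have := neg_abs_le (∑ d ∈ n.divisors.erase n, (moebius (n / d) : ℤ) * (q : ℤ) ^ d)
    linarith
  · have := pow_le_pow_right₀ hq1 hexp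
    linarith
end

section
/- Let F be a field with q elements and P ∈ F[t] a nonzero polynomial of degree at most n (with n ≥ 1). Then there exists a field quotient L of F[t] (i.e., a quotient of F[t] by a maximal ideal) of cardinality at most 2nq such that the image of P in L is nonzero. -/
open Polynomial

/-- Let `F` be a field with `q` elements and `P ∈ F[t]` a nonzero polynomial of degree at most
`n ≥ 1`. Then `P` survives (has nonzero image) in a quotient field of `F[t]` of cardinality
at most `2nq`. -/
theorem survives_in_small_quotient_field (F : Type) [Field F] [Fintype F] (q : ℕ)
    (hq : Fintype.card F = q) (n : ℕ) (hn : 1 ≤ n) (P : Polynomial F) (hP : P ≠ 0)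
    (hdeg : P.natDegree ≤ n) :
    ∃ I : Ideal (Polynomial F), I.IsMaximal ∧ Finite (Polynomial F ⧸ I) ∧
      Nat.card (Polynomial F ⧸ I) ≤ 2 * n * q ∧ Ideal.Quotient.mk I P ≠ 0 := by
  classical
  have hq2 : 2 ≤ q := hq ▸ Fintype.one_lt_card
  obtain ⟨p, hp⟩ := CharP.exists F
  haveI : CharP F p := hp
  haveI hFp : Fact p.Prime := ⟨CharP.char_is_prime F p⟩
  obtain ⟨k, hpk, hcard⟩ := FiniteField.card F p
  rw [hq] at hcard
  set d : ℕ := Nat.log q n + 1 with hd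
  set m : ℕ := q ^ d with hm
  have hn_lt : n < m := Nat.lt_pow_succ_log_self hq2 n
  have hm_le : m ≤ q * n := by
    have := Nat.pow_log_le_self q (by omega : n ≠ 0)
    calc m = q ^ Nat.log q n * q := by rw [hm, pow_succ]
    _ ≤ n * q := Nat.mul_le_mul_right _ this
    _ = q * n := Nat.mul_comm _ _
  have hmp : m = p ^ ((k : ℕ) * d) := by rw [hm, hcard, pow_mul]
  have hkd : (k : ℕ) * d ≠ 0 := by positivity
  set Q : F[X] := X ^ m - X with hQ
  have hQsep : Q.Separable := by
    rw [hQ, hmp]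
    exact galois_poly_separable p _ (dvd_pow_self p hkd)
  have hQsf : Squarefree Q := hQsep.squarefree
  have hQ0 : Q ≠ 0 := by
    rw [hQ, hmp]; exact FiniteField.X_pow_card_pow_sub_X_ne_zero _ hkd hpk.one_lt
  have hQdeg : Q.natDegree = m := by
    rw [hQ, hmp]; exact FiniteField.X_pow_card_pow_sub_X_natDegree_eq _ hkd hpk.one_lt
  set g : F[X] := EuclideanDomain.gcd Q P with hg
  have hgQ : g ∣ Q := EuclideanDomain.gcd_dvd_left Q P
  have hgP : g ∣ P := EuclideanDomain.gcd_dvd_right Q P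
  have hg0 : g ≠ 0 := by
    intro h
    exact hQ0 (EuclideanDomain.gcd_eq_zero_iff.mp h).1
  have hgdeg : g.natDegree ≤ n := (Polynomial.natDegree_le_of_dvd hgP hP).trans hdeg
  set R : F[X] := Q / g with hR
  have hQRg : g * R = Q := EuclideanDomain.mul_div_cancel' hg0 hgQ
  have hR0 : R ≠ 0 := by
    intro h; rw [h, mul_zero] at hQRg; exact hQ0 hQRg.symm
  have hRQ : R ∣ Q := ⟨g, by rw [← hQRg, mul_comm]⟩
  have hdegs : Q.natDegree = g.natDegree + R.natDegree := by
    rw [← hQRg, Polynomial.natDegree_mul hg0 hR0]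
  have hRunit : ¬ IsUnit R := by
    intro h
    have := Polynomial.natDegree_eq_zero_of_isUnit h
    omega
  obtain ⟨π, hπirr, hπR⟩ := WfDvdMonoid.exists_irreducible_factor hRunit hR0
  have hπQ : π ∣ Q := hπR.trans hRQ
  have hπP : ¬ π ∣ P := by
    intro h
    have hπg : π ∣ g := EuclideanDomain.dvd_gcd hπQ h
    have : π * π ∣ Q := hQRg ▸ mul_dvd_mul hπg hπR
    exact hπirr.not_isUnit (hQsf π this)
  haveI : Fact (Irreducible π) := ⟨hπirr⟩
  set I : Ideal F[X] := Ideal.span {π} with hI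
  refine ⟨I, PrincipalIdealRing.isMaximal_of_irreducible hπirr, ?_, ?_, ?_⟩
  · haveI : Module.Finite F (AdjoinRoot π) :=
      Module.Finite.of_basis (AdjoinRoot.powerBasis hπirr.ne_zero).basis
    have h : Finite (AdjoinRoot π) := Module.finite_of_finite F
    exact h
  · -- cardinality bound
    haveI : Module.Finite F (AdjoinRoot π) :=
      Module.Finite.of_basis (AdjoinRoot.powerBasis hπirr.ne_zero).basis
    haveI : Finite (AdjoinRoot π) := Module.finite_of_finite F
    haveI : Fintype (AdjoinRoot π) := Fintype.ofFinite _
    haveI : CharP (AdjoinRoot π) p :=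
      charP_of_injective_algebraMap (algebraMap F (AdjoinRoot π)).injective p
    set α : AdjoinRoot π := AdjoinRoot.root π with hα
    have hαm : α ^ m = α := by
      have h0 : Polynomial.aeval α Q = 0 := by
        rw [AdjoinRoot.aeval_eq]
        exact (AdjoinRoot.mk_eq_zero).mpr hπQ
      rw [hQ, map_sub, map_pow, Polynomial.aeval_X, sub_eq_zero] at h0
      exact h0
    set φ : AdjoinRoot π →+* AdjoinRoot π := iterateFrobenius (AdjoinRoot π) p ((k:ℕ) * d)
      with hφ
    have hφ_apply : ∀ x : AdjoinRoot π, φ x = x ^ m := by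
      intro x; rw [hφ, iterateFrobenius_def, ← hmp]
    have key : ∀ x : AdjoinRoot π, x ^ m = x := by
      intro x
      obtain ⟨f, rfl⟩ := AdjoinRoot.mk_surjective (g := π) x
      rw [← hφ_apply, ← AdjoinRoot.aeval_eq, Polynomial.aeval_def,
        Polynomial.hom_eval₂]
      have h1 : φ.comp (algebraMap F (AdjoinRoot π)) = algebraMap F (AdjoinRoot π) := by
        ext a
        rw [RingHom.comp_apply, hφ_apply, ← map_pow, hm]
        congr 1
        rw [← hq]
        exact FiniteField.pow_card_pow d a
      have h2 : φ α = α := by rw [hφ_apply, hαm]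
      rw [h1, h2, ← Polynomial.aeval_def, AdjoinRoot.aeval_eq]
    -- all elements are roots of X^m - X over L
    have hcardle : Fintype.card (AdjoinRoot π) ≤ m := by
      set QL : (AdjoinRoot π)[X] := X ^ m - X with hQL
      have hQL0 : QL ≠ 0 := by
        rw [hQL, hmp]; exact FiniteField.X_pow_card_pow_sub_X_ne_zero _ hkd hpk.one_lt
      have hQLdeg : QL.natDegree = m := by
        rw [hQL, hmp]; exact FiniteField.X_pow_card_pow_sub_X_natDegree_eq _ hkd hpk.one_lt
      have hsub : Finset.univ ⊆ QL.roots.toFinset := by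
        intro x _
        rw [Multiset.mem_toFinset, Polynomial.mem_roots hQL0]
        simp [hQL, Polynomial.IsRoot, key x, sub_eq_zero]
      calc Fintype.card (AdjoinRoot π) = Finset.univ.card := rfl
        _ ≤ QL.roots.toFinset.card := Finset.card_le_card hsub
        _ ≤ Multiset.card QL.roots := Multiset.toFinset_card_le _
        _ ≤ QL.natDegree := QL.card_roots' 
        _ = m := hQLdeg
    have heq : Nat.card (Polynomial F ⧸ I) = Fintype.card (AdjoinRoot π) :=
      Nat.card_eq_fintype_card (α := AdjoinRoot π)
    rw [heq]
    calc Fintype.card (AdjoinRoot π) ≤ m := hcardle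
      _ ≤ q * n := hm_le
      _ ≤ 2 * n * q := by ring_nf; omega
  · rw [Ne, Ideal.Quotient.eq_zero_iff_mem, hI, Ideal.mem_span_singleton]
    exact hπP
end

section
/- Let F be a field with q elements and suppose every monic irreducible polynomial of degree m - 1 in F[t] divides a nonzero polynomial P of degree at most n, where m ≥ 2. Then q^m ≤ 2nq. -/
open Polynomial IntermediateField

lemma splittingField_aux (F : Type) [Field F] [Fintype F] (q k : ℕ)
    (hq : Fintype.card F = q) (hk : k ≠ 0) :
    (∀ x : (X ^ q ^ k - X : F[X]).SplittingField, x ^ q ^ k = x) ∧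
    Nat.card (X ^ q ^ k - X : F[X]).SplittingField = q ^ k := by
  classical
  set g : F[X] := X ^ q ^ k - X with hg
  set E := g.SplittingField with hE
  have hq2 : 2 ≤ q := hq ▸ Fintype.one_lt_card
  obtain ⟨p, hp⟩ := CharP.exists F
  haveI : CharP F p := hp
  obtain ⟨r, hpprime, hr⟩ := FiniteField.card F p
  rw [hq] at hr
  haveI : Fact p.Prime := ⟨hpprime⟩
  haveI : CharP E p := charP_of_injective_algebraMap (algebraMap F E).injective p
  have hpq : p ∣ q := by rw [hr]; exact dvd_pow_self p r.2.ne'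
  have hgne : g ≠ 0 := FiniteField.X_pow_card_pow_sub_X_ne_zero _ hk hq2
  -- every element is a root
  have hroot : ∀ x : E, x ^ q ^ k = x := by
    have hadj : Algebra.adjoin F (g.rootSet E) = ⊤ := SplittingField.adjoin_rootSet g
    have hle : Subring.closure (Set.range (algebraMap F E) ∪ g.rootSet E) ≤
        RingHom.eqLocus (iterateFrobenius E p (r * k)) (RingHom.id E) := by
      rw [Subring.closure_le]
      rintro x (⟨a, rfl⟩ | hx)
      · show iterateFrobenius E p (r * k) (algebraMap F E a) = algebraMap F E a
        rw [iterateFrobenius_def, ← map_pow]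
        congr 1
        have : a ^ p ^ (r * k) = a ^ q ^ k := by
          rw [pow_mul, ← hr]
        rw [this, ← hq, FiniteField.pow_card_pow]
      · show iterateFrobenius E p (r * k) x = x
        rw [iterateFrobenius_def, pow_mul, ← hr]
        rw [mem_rootSet_of_ne hgne] at hx
        have hx' : (aeval x) (X ^ q ^ k - X : F[X]) = 0 := hx
        simp only [map_sub, map_pow, aeval_X, sub_eq_zero] at hx'
        exact hx'
    intro x
    have hx : x ∈ (⊤ : Subalgebra F E) := trivial
    rw [← hadj, Algebra.mem_adjoin_iff] at hx
    have := hle hx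
    have h2 : x ^ p ^ (r * k) = x := this
    rwa [pow_mul, ← hr] at h2
  refine ⟨hroot, ?_⟩
  -- count
  haveI : Finite E := Module.finite_of_finite F
  haveI : Fintype E := Fintype.ofFinite E
  have hsep : g.Separable := galois_poly_separable p (q ^ k) (hpq.trans (dvd_pow_self q hk))
  have hcard : Fintype.card (g.rootSet E) = g.natDegree :=
    card_rootSet_eq_natDegree hsep (SplittingField.splits g)
  have hnd : g.natDegree = q ^ k := FiniteField.X_pow_card_pow_sub_X_natDegree_eq _ hk hq2
  have huniv : g.rootSet E = Set.univ := by
    rw [Set.eq_univ_iff_forall]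
    intro x
    rw [mem_rootSet_of_ne hgne]
    show (aeval x) (X ^ q ^ k - X : F[X]) = 0
    simp only [map_sub, map_pow, aeval_X, sub_eq_zero]
    exact hroot x
  rw [hnd] at hcard
  rw [← hcard, ← Nat.card_eq_fintype_card, huniv]
  exact (Nat.card_congr (Equiv.Set.univ E)).symm


lemma sum_aux (q k : ℕ) (hq2 : 2 ≤ q) (hk1 : 1 ≤ k) :
    2 * ∑ d ∈ Nat.properDivisors k, q ^ d ≤ q ^ k := by
  rcases Nat.lt_or_ge k 3 with h3 | h3
  · interval_cases k
    · simp
    · have h2 : Nat.properDivisors 2 = {1} := rfl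
      rw [h2, Finset.sum_singleton, pow_one, pow_two]
      exact Nat.mul_le_mul_right q hq2
  · have h1 : ∑ d ∈ Nat.properDivisors k, q ^ d < q ^ (k / 2 + 1) := by
      apply Nat.geomSum_lt hq2
      intro d hd
      rw [Nat.mem_properDivisors] at hd
      have h2d : 2 * d ≤ k := by
        obtain ⟨e, rfl⟩ := hd.1
        have he : 2 ≤ e := by
          rcases Nat.lt_or_ge e 2 with he | he
          · interval_cases e <;> omega
          · exact he
        nlinarith
      omega
    have h2 : q ^ (k / 2 + 1) * 2 ≤ q ^ (k / 2 + 2) := by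
      rw [pow_succ]
      exact Nat.mul_le_mul_left _ hq2
    have h3' : q ^ (k / 2 + 2) ≤ q ^ k := Nat.pow_le_pow_right (by omega) (by omega)
    omega

/-- If every monic irreducible polynomial of degree `m - 1` (with `m ≥ 2`) over a field `F`
with `q` elements divides a nonzero polynomial `P` of degree at most `n`, then `q^m ≤ 2nq`. -/
theorem pow_le_of_all_irreducible_divide (F : Type) [Field F] [Fintype F] (q : ℕ)
    (hq : Fintype.card F = q) (m n : ℕ) (hm : 2 ≤ m) (P : Polynomial F) (hP : P ≠ 0)
    (hdeg : P.natDegree ≤ n)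
    (hdvd : ∀ π : Polynomial F, π.Monic → Irreducible π → π.natDegree = m - 1 → π ∣ P) :
    q ^ m ≤ 2 * n * q := by
  classical
  set k := m - 1 with hkdef
  have hk1 : 1 ≤ k := by omega
  have hq2 : 2 ≤ q := hq ▸ Fintype.one_lt_card
  obtain ⟨hroot, hcardE⟩ := splittingField_aux F q k hq (by omega)
  set E := (X ^ q ^ k - X : F[X]).SplittingField with hE
  haveI : FiniteDimensional F E := inferInstance
  haveI : Finite E := Module.finite_of_finite F
  haveI : Fintype E := Fintype.ofFinite E
  have hcardE' : Fintype.card E = q ^ k := by rw [← Nat.card_eq_fintype_card]; exact hcardE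
  have hfr : Module.finrank F E = k := by
    have h1 : Fintype.card E = Fintype.card F ^ Module.finrank F E := Module.card_eq_pow_finrank
    rw [hq, hcardE'] at h1
    exact Nat.pow_right_injective hq2 h1.symm
  have hint : ∀ x : E, IsIntegral F x := fun x => IsIntegral.of_finite F x
  have hdvdk : ∀ x : E, (minpoly F x).natDegree ∣ k := by
    intro x
    have ht := Module.finrank_mul_finrank F F⟮x⟯ E
    rw [IntermediateField.adjoin.finrank (hint x), hfr] at ht
    exact ⟨_, ht.symm⟩
  have hpow : ∀ x : E, x ^ q ^ (minpoly F x).natDegree = x := by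
    intro x
    set K := F⟮x⟯ with hK
    haveI : Fintype K := Fintype.ofFinite K
    have hcK : Fintype.card K = q ^ (minpoly F x).natDegree := by
      have := Module.card_eq_pow_finrank (K := F) (V := K)
      rwa [hq, IntermediateField.adjoin.finrank (hint x)] at this
    set y : K := ⟨x, IntermediateField.mem_adjoin_simple_self F x⟩ with hy
    have hgen := FiniteField.pow_card y
    rw [hcK] at hgen
    have := congrArg (Subtype.val) hgen
    simpa using this
  set A := Finset.univ.filter (fun x : E => (minpoly F x).natDegree = k) with hA
  set B := Finset.univ.filter (fun x : E => ¬ (minpoly F x).natDegree = k) with hB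
  have hAB : A.card + B.card = Fintype.card E :=
    Finset.card_filter_add_card_filter_not _
  have hAn : A.card ≤ n := by
    have hsub : A ⊆ ((P.map (algebraMap F E)).roots).toFinset := by
      intro x hx
      rw [hA, Finset.mem_filter] at hx
      obtain ⟨c, hc⟩ := hdvd (minpoly F x) (minpoly.monic (hint x))
        (minpoly.irreducible (hint x)) hx.2
      rw [Multiset.mem_toFinset, mem_roots (Polynomial.map_ne_zero hP), IsRoot.def,
        eval_map, ← aeval_def, hc, map_mul, minpoly.aeval, zero_mul]
    calc A.card ≤ _ := Finset.card_le_card hsub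
      _ ≤ Multiset.card (P.map (algebraMap F E)).roots := Multiset.toFinset_card_le _
      _ ≤ (P.map (algebraMap F E)).natDegree := card_roots' _
      _ = P.natDegree := natDegree_map _
      _ ≤ n := hdeg
  set h : E[X] := ∏ d ∈ Nat.properDivisors k, (X ^ q ^ d - X) with hh
  have hfacne : ∀ d ∈ Nat.properDivisors k, (X ^ q ^ d - X : E[X]) ≠ 0 := fun d hd =>
    FiniteField.X_pow_card_pow_sub_X_ne_zero _ (Nat.pos_of_mem_properDivisors hd).ne' hq2
  have hhne : h ≠ 0 := Finset.prod_ne_zero_iff.mpr hfacne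
  have hBcard : B.card ≤ ∑ d ∈ Nat.properDivisors k, q ^ d := by
    have hsub : B ⊆ h.roots.toFinset := by
      intro x hx
      rw [hB, Finset.mem_filter] at hx
      have hdpd : (minpoly F x).natDegree ∈ Nat.properDivisors k :=
        Nat.mem_properDivisors.mpr ⟨hdvdk x,
          lt_of_le_of_ne (Nat.le_of_dvd (by omega) (hdvdk x)) hx.2⟩
      obtain ⟨c, hc⟩ := Finset.dvd_prod_of_mem (fun d => (X ^ q ^ d - X : E[X])) hdpd
      rw [Multiset.mem_toFinset, mem_roots hhne, IsRoot.def, hh, hc]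
      simp [hpow x]
    calc B.card ≤ _ := Finset.card_le_card hsub
      _ ≤ Multiset.card h.roots := Multiset.toFinset_card_le _
      _ ≤ h.natDegree := card_roots' _
      _ = ∑ d ∈ Nat.properDivisors k, q ^ d := by
          rw [hh, natDegree_prod _ _ hfacne]
          exact Finset.sum_congr rfl fun d hd =>
            FiniteField.X_pow_card_pow_sub_X_natDegree_eq _
              (Nat.pos_of_mem_properDivisors hd).ne' hq2
  have hsum : 2 * ∑ d ∈ Nat.properDivisors k, q ^ d ≤ q ^ k := sum_aux q k hq2 hk1
  have hqk2n : q ^ k ≤ 2 * n := by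
    have : q ^ k ≤ n + ∑ d ∈ Nat.properDivisors k, q ^ d := by
      rw [← hcardE', ← hAB]; omega
    omega
  have hm' : q ^ m = q ^ k * q := by
    rw [hkdef, ← pow_succ]
    congr 1
    omega
  rw [hm']
  exact Nat.mul_le_mul_right q hqk2n
end

section
/- Let F be a field with q elements and P a nonzero polynomial in F[t_1, ..., t_k] of degree at most n ≥ 1 with respect to each indeterminate. Then there exists a finite field L that is a quotient of F[t_1, ..., t_k] by a maximal ideal, of cardinality at most (2n)^k · q, such that the image of P in L is nonzero. -/
open Polynomial

/-- There is a finite field extension of `F` of cardinality `p ^ N`, where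
`Fintype.card F = p ^ e` and `e ∣ N`, `N ≠ 0`. -/
lemma exists_ext_of_card (F : Type) [Field F] [Fintype F] (p e N : ℕ) [h_prime : Fact p.Prime]
    [CharP F p] (he : Fintype.card F = p ^ e) (heN : e ∣ N) (hN : N ≠ 0) :
    ∃ (L : Type) (_ : Field L) (_ : Algebra F L) (_ : Fintype L),
      Fintype.card L = p ^ N := by
  classical
  have hp : 1 < p := h_prime.out.one_lt
  set g : F[X] := X ^ p ^ N - X with hg
  have hgne : g ≠ 0 := FiniteField.X_pow_card_pow_sub_X_ne_zero _ hN hp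
  let L := g.SplittingField
  haveI : Finite L := Module.finite_of_finite F
  haveI : Fintype L := Fintype.ofFinite L
  haveI : CharP L p := charP_of_injective_algebraMap (algebraMap F L).injective p
  have hsep : g.Separable := galois_poly_separable p (p ^ N) (dvd_pow_self p hN)
  have key : Fintype.card (g.rootSet L) = g.natDegree :=
    card_rootSet_eq_natDegree hsep (SplittingField.splits g)
  have nat_degree_eq : g.natDegree = p ^ N :=
    FiniteField.X_pow_card_pow_sub_X_natDegree_eq _ hN hp
  rw [nat_degree_eq] at key
  have huniv : g.rootSet L = Set.univ := by
    rw [Set.eq_univ_iff_forall]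
    suffices ∀ (x) (_ : x ∈ (⊤ : Subalgebra F L)), x ∈ g.rootSet L by simpa
    rw [← SplittingField.adjoin_rootSet]
    simp_rw [Algebra.mem_adjoin_iff]
    intro x hx
    cases p; cases hp
    refine Subring.closure_induction ?_ ?_ ?_ ?_ ?_ ?_ hx <;> simp_rw [mem_rootSet_of_ne hgne]
    · rintro x (⟨r, rfl⟩ | hx)
      · simp only [g, map_sub, map_pow, aeval_X]
        rw [← map_pow]
        obtain ⟨c, rfl⟩ := heN
        have h2 := FiniteField.pow_card_pow c r
        rw [he, ← pow_mul] at h2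
        rw [h2, sub_self]
      · rwa [mem_rootSet_of_ne hgne] at hx
    · rw [← coeff_zero_eq_aeval_zero']
      simp only [g, coeff_X_pow, coeff_X_zero, sub_zero, _root_.map_eq_zero, ite_eq_right_iff,
        one_ne_zero, coeff_sub]
      intro hn
      exact Nat.not_lt_zero 1 (eq_zero_of_pow_eq_zero hn.symm ▸ hp)
    · simp [g]
    · simp only [g, aeval_X_pow, aeval_X, map_sub, add_pow_char_pow, sub_eq_zero]
      intro x y _ _ hx hy
      rw [hx, hy]
    · intro x _ hx
      simp only [g, sub_eq_zero, aeval_X_pow, aeval_X, map_sub, sub_neg_eq_add] at *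
      rw [neg_pow, hx, neg_one_pow_char_pow]
      ring
    · simp only [g, aeval_X_pow, aeval_X, map_sub, mul_pow, sub_eq_zero]
      intro x y _ _ hx hy
      rw [hx, hy]
  refine ⟨L, inferInstance, inferInstance, inferInstance, ?_⟩
  rw [← key]
  exact (Fintype.card_congr (by rw [huniv]; exact Equiv.Set.univ L)).symm

/-- Let `F` be a field with `q` elements and `P` a nonzero polynomial in `F[t₁,…,t_k]` of degree
at most `n ≥ 1` in each indeterminate. Then `P` survives in a quotient field of
`F[t₁,…,t_k]` (by a maximal ideal) of cardinality at most `(2n)^k * q`. -/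
theorem mv_survives_in_small_quotient_field (F : Type) [Field F] [Fintype F] (q : ℕ)
    (hq : Fintype.card F = q) (k n : ℕ) (hn : 1 ≤ n) (P : MvPolynomial (Fin k) F)
    (hP : P ≠ 0) (hdeg : ∀ i : Fin k, P.degreeOf i ≤ n) :
    ∃ I : Ideal (MvPolynomial (Fin k) F), I.IsMaximal ∧ Finite (MvPolynomial (Fin k) F ⧸ I) ∧
      Nat.card (MvPolynomial (Fin k) F ⧸ I) ≤ (2 * n) ^ k * q ∧
      Ideal.Quotient.mk I P ≠ 0 := by
  classical
  -- First, find a finite field `L`, an `F`-algebra, with `Fintype.card L ≤ (2n)^k * q`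
  -- and a point `a : Fin k → L` with `aeval a P ≠ 0`.
  obtain ⟨L, _, _, _, a, ha, hcard⟩ :
      ∃ (L : Type) (_ : Field L) (_ : Algebra F L) (_ : Fintype L) (a : Fin k → L),
        (MvPolynomial.aeval a) P ≠ 0 ∧ Fintype.card L ≤ (2 * n) ^ k * q := by
    rcases Nat.eq_zero_or_pos k with hk | hk
    · subst hk
      refine ⟨F, inferInstance, inferInstance, inferInstance, Fin.elim0, ?_, by simp [hq]⟩
      haveI : IsEmpty (Fin 0) := inferInstance
      have : (MvPolynomial.aeval Fin.elim0 : MvPolynomial (Fin 0) F →ₐ[F] F) =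
          (MvPolynomial.isEmptyAlgEquiv F (Fin 0)).toAlgHom := by
        apply MvPolynomial.algHom_ext
        exact fun i => i.elim0
      rw [this]
      simpa using (map_ne_zero_iff _ (MvPolynomial.isEmptyAlgEquiv F (Fin 0)).injective).mpr hP
    · -- k ≥ 1
      obtain ⟨p, hp⟩ := CharP.exists F
      haveI := hp
      obtain ⟨e, hpp, he⟩ := FiniteField.card F p
      haveI : Fact p.Prime := ⟨hpp⟩
      have hq2 : 2 ≤ q := hq ▸ Fintype.one_lt_card
      have hex : ∃ m : ℕ, n < q ^ m := ⟨n, lt_of_lt_of_le (Nat.lt_two_pow_self (n := n))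
        (Nat.pow_le_pow_left hq2 _)⟩
      set m := Nat.find hex with hm
      have hmspec : n < q ^ m := Nat.find_spec hex
      have hm0 : m ≠ 0 := by
        intro h
        rw [h, pow_zero] at hmspec
        omega
      have hprev : ¬ n < q ^ (m - 1) := Nat.find_min hex (by omega)
      have hqm_le : q ^ m ≤ 2 * n * q := by
        have : q ^ m = q ^ (m - 1) * q := by
          rw [← pow_succ]
          congr 1
          omega
        rw [this]
        have h1 : q ^ (m - 1) ≤ n := by omega
        nlinarith
      obtain ⟨L, _, _, _, hcardL⟩ := exists_ext_of_card F p (e : ℕ) ((e : ℕ) * m)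
        he ⟨m, rfl⟩ (Nat.mul_ne_zero e.pos.ne' hm0)
      have hq' : q = p ^ (e : ℕ) := hq ▸ he
      have hcardL' : Fintype.card L = q ^ m := by
        rw [hcardL, hq', ← pow_mul]
      -- `P` survives at some point of `L^k`
      set P' : MvPolynomial (Fin k) L := MvPolynomial.map (algebraMap F L) P with hP'
      have hP'ne : P' ≠ 0 := by
        intro h
        exact hP (MvPolynomial.map_injective _ (algebraMap F L).injective (by simpa using h))
      have hmem : P' ∈ MvPolynomial.restrictDegree (Fin k) L (Fintype.card L - 1) := by
        rw [MvPolynomial.mem_restrictDegree]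
        intro s hs i
        have hs' : s ∈ P.support := MvPolynomial.support_map_subset _ _ hs
        have h1 : s i ≤ P.degreeOf i := MvPolynomial.degreeOf_le_iff.mp le_rfl s hs'
        have h2 : n ≤ Fintype.card L - 1 := by
          rw [hcardL']
          omega
        exact le_trans (le_trans h1 (hdeg i)) h2
      have : ¬ ∀ v : Fin k → L, MvPolynomial.eval v P' = 0 := by
        intro h
        exact hP'ne (MvPolynomial.eq_zero_of_eval_eq_zero _ _ P' h hmem)
      push_neg at this
      obtain ⟨a, ha⟩ := this
      refine ⟨L, inferInstance, inferInstance, inferInstance, a, ?_, ?_⟩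
      · rwa [MvPolynomial.aeval_def, ← MvPolynomial.eval_map]
      · calc Fintype.card L = q ^ m := hcardL'
          _ ≤ 2 * n * q := hqm_le
          _ ≤ (2 * n) ^ k * q := by
              have : 2 * n ≤ (2 * n) ^ k := Nat.le_self_pow (by omega) _
              exact Nat.mul_le_mul_right q this
  -- Now take `I` to be the kernel of evaluation at `a`.
  set φ : MvPolynomial (Fin k) F →+* L :=
    ((MvPolynomial.aeval a : MvPolynomial (Fin k) F →ₐ[F] L) : MvPolynomial (Fin k) F →+* L)
    with hφ
  let eqv : (MvPolynomial (Fin k) F ⧸ RingHom.ker φ) ≃+* φ.range :=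
    RingHom.quotientKerEquivRange φ
  haveI hfin : Finite (MvPolynomial (Fin k) F ⧸ RingHom.ker φ) :=
    Finite.of_equiv _ eqv.symm.toEquiv
  haveI : (RingHom.ker φ).IsPrime := RingHom.ker_isPrime φ
  have hfield : IsField (MvPolynomial (Fin k) F ⧸ RingHom.ker φ) :=
    Finite.isField_of_domain _
  refine ⟨RingHom.ker φ, Ideal.Quotient.maximal_of_isField _ hfield, hfin, ?_, ?_⟩
  · calc Nat.card (MvPolynomial (Fin k) F ⧸ RingHom.ker φ) = Nat.card φ.range :=
          Nat.card_congr eqv.toEquiv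
      _ ≤ Nat.card L := Nat.card_le_card_of_injective _ Subtype.val_injective
      _ = Fintype.card L := Nat.card_eq_fintype_card
      _ ≤ (2 * n) ^ k * q := hcard
  · rw [Ne, Ideal.Quotient.eq_zero_iff_mem, RingHom.mem_ker]
    exact ha
end
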